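/- Let δ > 0 and Λ > 1. There is a constant N₀, depending only on δ, Λ and the doubling constant C_D, with the following property: for every x₀ ∈ X, every r > 0, and every finite chain of points x = x₁, x₂, …, x_m = y contained in the annulus B(x₀,Λr) \ B(x₀,r/Λ) with d(x_k, x_{k+1}) < δr for k = 1,…,m−1, there exist N ≤ N₀ and points y₁, …, y_N ∈ B(x₀,Λr) \ B(x₀,r/Λ) such that x ∈ B(y₁, 2δr), y ∈ B(y_N, 2δr), and the consecutive balls B(y_k, 2δr) and B(y_{k+1}, 2δr) intersect (equivalently d(y_k, y_{k+1}) < 4δr) for k = 1,…,N−1. Moreover, if τ ≤ 1/(4δΛ), then the dilated balls B(y_k, 2τδr) are contained in B(x₀, 2Λr) \ B(x₀, r/(2Λ)). -/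

import Mathlib

open MeasureTheory Set Metric

/-- Iterated doubling. -/
lemma aux_dbl_iter {X : Type*} [MetricSpace X] [MeasurableSpace X] (μ : Measure X)
    (C : ENNReal) (hdbl : ∀ (x : X) (s : ℝ), 0 < s → μ (ball x (2 * s)) ≤ C * μ (ball x s))
    (J : ℕ) (x : X) (s : ℝ) (hs : 0 < s) :
    μ (ball x (2 ^ J * s)) ≤ C ^ J * μ (ball x s) := by
  induction J with
  | zero => simp
  | succ J ih =>
    have h1 : (2:ℝ) ^ (J+1) * s = 2 * (2 ^ J * s) := by ring
    have h2 : 0 < (2:ℝ) ^ J * s := by positivity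
    calc μ (ball x ((2:ℝ) ^ (J+1) * s)) = μ (ball x (2 * (2 ^ J * s))) := by rw [h1]
      _ ≤ C * μ (ball x (2 ^ J * s)) := hdbl x _ h2
      _ ≤ C * (C ^ J * μ (ball x s)) := by exact mul_le_mul_right ih C
      _ = C ^ (J+1) * μ (ball x s) := by ring

/-- Packing bound: `n` points in `ball x₀ R` that are pairwise `≥ 2s` apart satisfy
`n ≤ C^J` provided `2R + s ≤ 2^J s`. -/
lemma aux_pack {X : Type*} [MetricSpace X] [MeasurableSpace X] [BorelSpace X] (μ : Measure X)
    (C : ENNReal)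
    (hμpos : ∀ (x : X) (r : ℝ), 0 < r → 0 < μ (ball x r) ∧ μ (ball x r) < ⊤)
    (hdbl : ∀ (x : X) (s : ℝ), 0 < s → μ (ball x (2 * s)) ≤ C * μ (ball x s))
    (s R : ℝ) (hs : 0 < s) (hR : 0 < R) (J : ℕ) (hJ : 2 * R + s ≤ 2 ^ J * s)
    (x₀ : X) (n : ℕ) (p : ℕ → X)
    (hp : ∀ i < n, p i ∈ ball x₀ R)
    (hsep : ∀ i j, i < n → j < n → i ≠ j → 2 * s ≤ dist (p i) (p j)) :
    (n : ENNReal) ≤ C ^ J := by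
  set M := μ (ball x₀ (R + s)) with hM
  have hM0 : 0 < M := (hμpos x₀ (R + s) (by positivity)).1
  have hMtop : M < ⊤ := (hμpos x₀ (R + s) (by positivity)).2
  -- each small ball captures at least M / C^J
  have key : ∀ i < n, M ≤ C ^ J * μ (ball (p i) s) := by
    intro i hi
    have h1 : ball x₀ (R + s) ⊆ ball (p i) (2 ^ J * s) := by
      intro w hw
      have h2 : dist w (p i) ≤ dist w x₀ + dist x₀ (p i) := dist_triangle _ _ _
      have h3 : dist x₀ (p i) < R := by
        have := hp i hi; rw [mem_ball, dist_comm] at this; exact this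
      have h4 : dist w x₀ < R + s := mem_ball.mp hw
      have : dist w (p i) < 2 * R + s := by linarith
      exact mem_ball.mpr (lt_of_lt_of_le this hJ)
    calc M ≤ μ (ball (p i) (2 ^ J * s)) := measure_mono h1
      _ ≤ C ^ J * μ (ball (p i) s) := aux_dbl_iter μ C hdbl J (p i) s hs
  -- small balls are pairwise disjoint
  have hdisj : (↑(Finset.range n) : Set ℕ).PairwiseDisjoint (fun i => ball (p i) s) := by
    intro i hi j hj hij
    simp only [Finset.coe_range, mem_Iio] at hi hj
    exact ball_disjoint_ball (by have := hsep i j hi hj hij; linarith)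
  have hunion : μ (⋃ i ∈ Finset.range n, ball (p i) s) = ∑ i ∈ Finset.range n, μ (ball (p i) s) :=
    measure_biUnion_finset hdisj (fun i _ => measurableSet_ball)
  have hsub : (⋃ i ∈ Finset.range n, ball (p i) s) ⊆ ball x₀ (R + s) := by
    intro w hw
    simp only [mem_iUnion, Finset.mem_range] at hw
    obtain ⟨i, hi, hwi⟩ := hw
    have h3 : dist (p i) x₀ < R := mem_ball.mp (hp i hi)
    have h4 : dist w (p i) < s := mem_ball.mp hwi
    exact mem_ball.mpr (lt_of_le_of_lt (dist_triangle w (p i) x₀) (by linarith))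
  have hmain : (n : ENNReal) * M ≤ C ^ J * M := by
    calc (n : ENNReal) * M = ∑ _i ∈ Finset.range n, M := by
          simp [Finset.sum_const, mul_comm]
      _ ≤ ∑ i ∈ Finset.range n, C ^ J * μ (ball (p i) s) := by
          refine Finset.sum_le_sum ?_
          intro i hi; exact key i (Finset.mem_range.mp hi)
      _ = C ^ J * ∑ i ∈ Finset.range n, μ (ball (p i) s) := by rw [Finset.mul_sum]
      _ = C ^ J * μ (⋃ i ∈ Finset.range n, ball (p i) s) := by rw [hunion]
      _ ≤ C ^ J * M := mul_le_mul_right (measure_mono hsub) _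
  exact (ENNReal.mul_le_mul_iff_left hM0.ne' hMtop.ne).mp hmain

theorem stmt_10 {X : Type*} [MetricSpace X] [MeasurableSpace X] [BorelSpace X] (μ : Measure X)
    (C_D : ℝ) (hC : 1 ≤ C_D)
    (hμpos : ∀ (x : X) (r : ℝ), 0 < r → 0 < μ (ball x r) ∧ μ (ball x r) < ⊤)
    (hdbl : ∀ (x : X) (r : ℝ), 0 < r →
      μ (ball x (2 * r)) ≤ ENNReal.ofReal C_D * μ (ball x r))
    (δ Λ : ℝ) (hδ : 0 < δ) (hΛ : 1 < Λ) :
    ∃ N₀ : ℕ, ∀ (x₀ : X) (r : ℝ), 0 < r →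
      ∀ (m : ℕ) (z : ℕ → X), 1 ≤ m →
      (∀ k < m, z k ∈ ball x₀ (Λ * r) \ ball x₀ (r / Λ)) →
      (∀ k, k + 1 < m → dist (z k) (z (k + 1)) < δ * r) →
      ∃ (N : ℕ) (y : ℕ → X), 1 ≤ N ∧ N ≤ N₀ ∧
        (∀ k < N, y k ∈ ball x₀ (Λ * r) \ ball x₀ (r / Λ)) ∧
        z 0 ∈ ball (y 0) (2 * δ * r) ∧
        z (m - 1) ∈ ball (y (N - 1)) (2 * δ * r) ∧
        (∀ k, k + 1 < N → dist (y k) (y (k + 1)) < 4 * δ * r) ∧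
        (∀ τ : ℝ, 0 < τ → τ ≤ 1 / (4 * δ * Λ) → ∀ k < N,
          ball (y k) (2 * τ * δ * r)
            ⊆ ball x₀ (2 * Λ * r) \ ball x₀ (r / (2 * Λ))) := by
  classical
  -- choose J with 2Λ + δ ≤ 2^J δ  (so that 2*(Λ r) + δ r ≤ 2^J (δ r))
  obtain ⟨J, hJ⟩ : ∃ J : ℕ, (2 * Λ + δ) / δ < 2 ^ J := pow_unbounded_of_one_lt _ one_lt_two
  have hJ' : 2 * Λ + δ ≤ 2 ^ J * δ := by
    rw [div_lt_iff₀ hδ] at hJ; linarith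
  -- the packing bound as a natural number
  set B : ℕ := ⌈C_D ^ J⌉₊ + 1 with hB
  refine ⟨2 * B, ?_⟩
  intro x₀ r hr m z hm hz hchain
  have hδr : 0 < δ * r := by positivity
  -- the greedy index sequence
  obtain ⟨k, hk0, hkS⟩ : ∃ k : ℕ → ℕ, k 0 = 0 ∧ ∀ i,
      k (i+1) = Nat.findGreatest (fun j => dist (z (k i)) (z j) < 2 * δ * r) (m - 1) :=
    ⟨fun i => Nat.rec 0
      (fun _ ki => Nat.findGreatest (fun j => dist (z ki) (z j) < 2 * δ * r) (m - 1)) i,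
     rfl, fun i => rfl⟩
  have hkle : ∀ i, k i ≤ m - 1 := by
    intro i; cases i with
    | zero => simp [hk0]
    | succ i =>
      rw [hkS]
      exact Nat.findGreatest_le (P := fun j => dist (z (k i)) (z j) < 2 * δ * r) (m - 1)
  have hself : ∀ i, dist (z (k i)) (z (k i)) < 2 * δ * r := by
    intro i; rw [dist_self]; linarith
  have hstep : ∀ i, dist (z (k i)) (z (k (i+1))) < 2 * δ * r := by
    intro i; rw [hkS]; exact Nat.findGreatest_spec (P := fun j => dist (z (k i)) (z j) < 2 * δ * r) (hkle i) (hself i)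
  have hmono : ∀ i, k i ≤ k (i+1) := by
    intro i; rw [hkS]; exact Nat.le_findGreatest (P := fun j => dist (z (k i)) (z j) < 2 * δ * r) (hkle i) (hself i)
  have hstrict : ∀ i, k i < m - 1 → k i + 1 ≤ k (i+1) := by
    intro i hi
    rw [hkS]
    refine Nat.le_findGreatest (P := fun j => dist (z (k i)) (z j) < 2 * δ * r) hi ?_
    have h1 : k i + 1 < m := by omega
    exact lt_of_lt_of_le (hchain (k i) h1) (by nlinarith)
  have hgreat : ∀ i j, k (i+1) < j → j ≤ m - 1 → ¬ dist (z (k i)) (z j) < 2 * δ * r := by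
    intro i j h1 h2
    rw [hkS] at h1
    exact Nat.findGreatest_is_greatest h1 h2
  -- the sequence reaches m - 1
  have hreach : ∀ i, k i = m - 1 ∨ i ≤ k i := by
    intro i
    induction i with
    | zero => right; exact Nat.zero_le _
    | succ i ih =>
      by_cases h2 : k i = m - 1
      · left
        have ha := hmono i
        have hb := hkle (i+1)
        omega
      · have h3 : k i < m - 1 := lt_of_le_of_ne (hkle i) h2
        have h4 := hstrict i h3
        rcases ih with h | h
        · omega
        · right; omega
  have hex : ∃ i, k i = m - 1 := by
    rcases hreach (m-1) with h | h
    · exact ⟨m-1, h⟩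
    · exact ⟨m-1, le_antisymm (hkle _) h⟩
  set I := Nat.find hex with hIdef
  have hI : k I = m - 1 := Nat.find_spec hex
  have hIlt : ∀ i < I, k i < m - 1 := by
    intro i hi
    exact lt_of_le_of_ne (hkle i) (Nat.find_min hex hi)
  -- strict monotonicity up to I
  have hadd : ∀ d i, i + d ≤ I → k i + d ≤ k (i + d) := by
    intro d
    induction d with
    | zero => intro i _; simp
    | succ d ih =>
      intro i h
      have h1 : i + d < I := by omega
      have h2 : k (i+d) < m - 1 := hIlt _ h1
      have h3 := hstrict (i+d) h2
      have h4 := ih i (by omega)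
      have : i + (d+1) = (i + d) + 1 := by omega
      rw [this]; omega
  -- separation of points two apart
  have hsep : ∀ i j, i + 2 ≤ j → j ≤ I → 2 * δ * r ≤ dist (z (k i)) (z (k j)) := by
    intro i j hij hjI
    have h1 : k (i+1) < k j := by
      have h2 := hadd (j - (i+1)) (i+1) (by omega)
      have he : i + 1 + (j - (i+1)) = j := by omega
      rw [he] at h2
      omega
    have := hgreat i (k j) h1 (hkle j)
    linarith [not_lt.mp this]
  -- bound I via the packing lemma
  have hpack : (⌊(I:ℝ)⌋ : ℤ) = I := by simp
  have hIbound : I / 2 + 1 ≤ B := by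
    have hflt : ∀ t, 2 * t ≤ I → k (2 * t) ≤ m - 1 := fun t _ => hkle _
    have hcount : ((I / 2 + 1 : ℕ) : ENNReal) ≤ (ENNReal.ofReal C_D) ^ J := by
      refine aux_pack μ (ENNReal.ofReal C_D) hμpos
        (fun x s hs => hdbl x s hs) (δ * r) (Λ * r) hδr (by positivity) J
        (by nlinarith) x₀ (I / 2 + 1) (fun t => z (k (2 * t))) ?_ ?_
      · intro t ht
        have h1 : k (2 * t) < m := by have := hkle (2*t); omega
        exact (hz _ h1).1
      · intro t t' ht ht' htt'
        rcases Nat.lt_or_ge t t' with h | h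
        · have h2 : 2 * t + 2 ≤ 2 * t' := by omega
          have h3 : 2 * t' ≤ I := by omega
          have h5 := hsep _ _ h2 h3
          show 2 * (δ * r) ≤ dist (z (k (2 * t))) (z (k (2 * t')))
          linarith
        · have h : t' < t := by omega
          have h2 : 2 * t' + 2 ≤ 2 * t := by omega
          have h3 : 2 * t ≤ I := by omega
          have h5 := hsep _ _ h2 h3
          show 2 * (δ * r) ≤ dist (z (k (2 * t))) (z (k (2 * t')))
          rw [dist_comm]
          linarith
    -- convert the ENNReal bound to ℕ
    have h1 : ((I / 2 + 1 : ℕ) : ENNReal) ≤ ENNReal.ofReal (C_D ^ J) := by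
      rwa [ENNReal.ofReal_pow (by linarith : (0:ℝ) ≤ C_D) J]
    have h2 : ((I / 2 + 1 : ℕ) : ℝ) ≤ C_D ^ J := by
      have h3 := ENNReal.toReal_mono ENNReal.ofReal_ne_top h1
      rw [ENNReal.toReal_ofReal (by positivity : (0:ℝ) ≤ C_D ^ J)] at h3
      rw [ENNReal.toReal_natCast] at h3
      exact h3
    have h4 : (I / 2 + 1 : ℕ) ≤ ⌈C_D ^ J⌉₊ := by
      have h5 : ((I / 2 + 1 : ℕ) : ℝ) ≤ (⌈C_D ^ J⌉₊ : ℝ) := le_trans h2 (Nat.le_ceil _)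
      exact_mod_cast h5
    omega
  -- assemble the answer
  refine ⟨I + 1, fun i => z (k i), le_add_self, by omega, ?_, ?_, ?_, ?_, ?_⟩
  · intro i hi
    exact hz (k i) (by have := hkle i; omega)
  · show z 0 ∈ ball (z (k 0)) (2 * δ * r)
    rw [hk0]
    exact mem_ball.mpr (by rw [dist_self]; linarith)
  · show z (m - 1) ∈ ball (z (k (I + 1 - 1))) (2 * δ * r)
    simp only [Nat.add_sub_cancel]
    rw [hI]
    exact mem_ball.mpr (by rw [dist_self]; linarith)
  · intro i hi
    have hst := hstep i
    show dist (z (k i)) (z (k (i + 1))) < 4 * δ * r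
    linarith
  · intro τ hτ hτ' i hi w hw
    simp only [] at hw ⊢
    have hzi := hz (k i) (by have := hkle i; omega)
    have h1 : dist (z (k i)) x₀ < Λ * r := mem_ball.mp hzi.1
    have h2 : r / Λ ≤ dist (z (k i)) x₀ := by
      have := hzi.2
      rw [mem_ball] at this
      push_neg at this
      exact this
    have h3 : dist w (z (k i)) < 2 * τ * δ * r := mem_ball.mp hw
    have hΛ0 : 0 < Λ := by linarith
    have hτδ : 2 * τ * δ * r ≤ r / (2 * Λ) := by
      rw [le_div_iff₀ (by positivity : (0:ℝ) < 2 * Λ)]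
      have h7 : τ * (4 * δ * Λ) ≤ 1 := by
        rw [le_div_iff₀ (by positivity : (0:ℝ) < 4 * δ * Λ)] at hτ'
        exact hτ'
      nlinarith [mul_le_mul_of_nonneg_left h7 hr.le]
    constructor
    · rw [mem_ball]
      have h4 : dist w x₀ ≤ dist w (z (k i)) + dist (z (k i)) x₀ := dist_triangle _ _ _
      have h5 : r / (2 * Λ) < Λ * r := by
        have h8 : (1:ℝ) < 2 * Λ * Λ := by nlinarith
        rw [div_lt_iff₀ (by positivity : (0:ℝ) < 2 * Λ)]
        nlinarith [mul_lt_mul_of_pos_left h8 hr]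
      linarith
    · rw [mem_ball]
      push_neg
      have h4 : dist (z (k i)) x₀ ≤ dist (z (k i)) w + dist w x₀ := dist_triangle _ _ _
      rw [dist_comm] at h3
      have h6 : r / Λ - r / (2 * Λ) = r / (2 * Λ) := by
        field_simp; ring
      linarith
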